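/- Let k ≥ 1 be an integer and let (a_i), (b_i), (h_i) for i = 1,…,k be sequences of positive reals satisfying (1) 0 ≤ h_1 ≤ h_2 ≤ … ≤ h_k ≤ 1, and (2) for every j ∈ [k], Σ_{i≤j} a_i·h_i ≥ (1/4)·Σ_{i≤j} (a_i + b_i). Then Σ_{i∈[k]} b_i·(1−h_i) ≤ (1/4)·Σ_{i∈[k]} (a_i + b_i). -/

import Mathlib

open Finset

noncomputable def Wf (x : ℝ) : ℝ := if x ≤ 1/2 then 3 - 4*x else (4*x - 1)⁻¹

lemma Wf_nonneg (x : ℝ) : 0 ≤ Wf x := by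
  unfold Wf
  split
  · linarith
  · have : (0:ℝ) < 4*x - 1 := by linarith [not_le.mp (by assumption)]
    positivity

lemma Wf_anti {x y : ℝ} (hxy : x ≤ y) : Wf y ≤ Wf x := by
  unfold Wf
  split_ifs with hx hy hy
  · linarith
  · exfalso; exact hy (le_trans hxy hx)
  · have hpos : (0:ℝ) < 4*y - 1 := by linarith [not_le.mp hx]
    have h1 : (1:ℝ) ≤ 4*y - 1 := by linarith [not_le.mp hx]
    have hinv : (4*y - 1)⁻¹ ≤ 1 := by
      rw [inv_le_one₀ hpos]; exact h1
    linarith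
  · have hx' := not_le.mp hx
    have hy' := not_le.mp hy
    apply inv_anti₀
    · linarith
    · linarith

lemma abel_nonneg (k : ℕ) (W d : ℕ → ℝ)
    (hW0 : ∀ i < k, 0 ≤ W i)
    (hWa : ∀ i j, i ≤ j → j < k → W j ≤ W i)
    (hd : ∀ j < k, 0 ≤ ∑ i ∈ range (j+1), d i) :
    0 ≤ ∑ i ∈ range k, W i * d i := by
  induction k generalizing W with
  | zero => simp
  | succ n ih =>
    have e1 : ∑ i ∈ range n, (W i - W n) * d i
        = ∑ i ∈ range n, W i * d i - W n * ∑ i ∈ range n, d i := by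
      rw [Finset.mul_sum, ← Finset.sum_sub_distrib]
      exact sum_congr rfl (fun i _ => by ring)
    have key : ∑ i ∈ range (n+1), W i * d i
        = (∑ i ∈ range n, (W i - W n) * d i) + W n * ∑ i ∈ range (n+1), d i := by
      rw [sum_range_succ (f := fun i => W i * d i), e1, sum_range_succ (f := d)]
      ring
    rw [key]
    have h1 : 0 ≤ ∑ i ∈ range n, (W i - W n) * d i := by
      apply ih (fun i => W i - W n)
      · intro i hi
        have := hWa i n (le_of_lt hi) (Nat.lt_succ_self n)
        simp; linarith
      · intro i j hij hj
        have := hWa i j hij (Nat.lt_succ_of_lt hj)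
        simp; linarith
      · intro j hj
        exact hd j (Nat.lt_succ_of_lt hj)
    have h2 : 0 ≤ W n * ∑ i ∈ range (n+1), d i :=
      mul_nonneg (hW0 n (Nat.lt_succ_self n)) (hd n (Nat.lt_succ_self n))
    linarith

lemma pointwise (a b x : ℝ) (ha : 0 < a) (hb : 0 < b) :
    b * (1 - x) ≤ (a + b)/4 - Wf x * (a * x - (a + b)/4) := by
  unfold Wf
  split
  · rename_i hx
    nlinarith [mul_nonneg (le_of_lt ha) (sq_nonneg (2*x - 1))]
  · rename_i hx
    have hx' : (1:ℝ)/2 < x := not_le.mp hx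
    have hpos : (0:ℝ) < 4*x - 1 := by linarith
    have e : (a + b)/4 - (4*x - 1)⁻¹ * (a*x - (a+b)/4) - b*(1-x)
        = (b * (2*x - 1)^2) / (4*x - 1) := by
      field_simp
      ring
    have hnn : 0 ≤ (b * (2*x - 1)^2) / (4*x - 1) := by positivity
    linarith [e ▸ hnn]

theorem stmt_2 (k : ℕ) (hk : 1 ≤ k) (a b h : ℕ → ℝ)
    (ha : ∀ i < k, 0 < a i) (hb : ∀ i < k, 0 < b i)
    (h0 : 0 ≤ h 0) (h1 : h (k - 1) ≤ 1)
    (hmono : ∀ i, i + 1 < k → h i ≤ h (i + 1))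
    (hyp : ∀ j < k, (1 / 4) * ∑ i ∈ Finset.range (j + 1), (a i + b i) ≤
      ∑ i ∈ Finset.range (j + 1), a i * h i) :
    ∑ i ∈ Finset.range k, b i * (1 - h i) ≤
      (1 / 4) * ∑ i ∈ Finset.range k, (a i + b i) := by
  have hm : ∀ j, j < k → ∀ i, i ≤ j → h i ≤ h j := by
    intro j
    induction j with
    | zero =>
      intro _ i hi
      have : i = 0 := Nat.le_zero.mp hi
      subst this; exact le_rfl
    | succ n ihn =>
      intro hj i hi
      rcases Nat.eq_or_lt_of_le hi with rfl | hlt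
      · exact le_rfl
      · have hin : i ≤ n := Nat.lt_succ_iff.mp hlt
        exact le_trans (ihn (Nat.lt_of_succ_lt hj) i hin) (hmono n hj)
  set d : ℕ → ℝ := fun i => a i * h i - (a i + b i)/4 with hd_def
  have hd : ∀ j < k, 0 ≤ ∑ i ∈ range (j+1), d i := by
    intro j hj
    have hj' := hyp j hj
    have e : ∑ i ∈ range (j+1), d i
        = ∑ i ∈ range (j+1), a i * h i - (1/4) * ∑ i ∈ range (j+1), (a i + b i) := by
      rw [Finset.mul_sum, ← Finset.sum_sub_distrib]
      exact sum_congr rfl (fun i _ => by simp only [hd_def]; ring)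
    rw [e]; linarith
  have habel : 0 ≤ ∑ i ∈ range k, Wf (h i) * d i := by
    apply abel_nonneg
    · intro i _; exact Wf_nonneg (h i)
    · intro i j hij hj; exact Wf_anti (hm j hj i hij)
    · exact hd
  have hpt : ∑ i ∈ range k, b i * (1 - h i)
      ≤ ∑ i ∈ range k, ((a i + b i)/4 - Wf (h i) * d i) := by
    apply Finset.sum_le_sum
    intro i hi
    have hik := Finset.mem_range.mp hi
    exact pointwise (a i) (b i) (h i) (ha i hik) (hb i hik)
  have e2 : ∑ i ∈ range k, ((a i + b i)/4 - Wf (h i) * d i)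
      = (1/4) * ∑ i ∈ range k, (a i + b i) - ∑ i ∈ range k, Wf (h i) * d i := by
    rw [Finset.mul_sum, ← Finset.sum_sub_distrib]
    exact sum_congr rfl (fun i _ => by ring)
  rw [e2] at hpt
  linarith
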